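/- If ξ has an arbitrary cdf and U is an independent uniform(0,1) random variable, then the distributional transform F̂_ξ(ξ; U) := P[ξ < x]|_{x=ξ} + U·P[ξ = x]|_{x=ξ} is uniformly distributed on (0,1). -/

import Mathlib

open MeasureTheory ProbabilityTheory Set Filter Topology

lemma aux_null (ν : Measure ℝ) (B : Set ℝ) (hB : BddAbove B)
    (h : ∀ x ∈ B, ν (B ∩ Set.Iic x) = 0) : ν B = 0 := by
  rcases B.eq_empty_or_nonempty with hBe | hBne
  · simp [hBe]
  obtain ⟨u, -, hut, hum⟩ := exists_seq_tendsto_sSup hBne hB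
  by_cases hs : sSup B ∈ B
  · have hsub : B ⊆ B ∩ Set.Iic (sSup B) := fun y hy => ⟨hy, le_csSup hB hy⟩
    exact le_antisymm ((measure_mono hsub).trans (le_of_eq (h _ hs))) (zero_le)
  · have hsub : B ⊆ ⋃ n, B ∩ Set.Iic (u n) := by
      intro y hy
      have hy' : y < sSup B := lt_of_le_of_ne (le_csSup hB hy) (fun he => hs (he ▸ hy))
      obtain ⟨n, hn⟩ := (hut.eventually (eventually_gt_nhds hy')).exists
      exact Set.mem_iUnion.2 ⟨n, hy, le_of_lt hn⟩
    exact le_antisymm ((measure_mono hsub).trans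
      (le_of_eq (measure_iUnion_null fun n => h _ (hum n)))) (zero_le)

lemma aux_quantile (ν : Measure ℝ) [IsProbabilityMeasure ν] {t : ℝ} (h0 : 0 < t) (h1 : t < 1) :
    ∃ q : ℝ, ENNReal.ofReal t ≤ ν (Set.Iic q) ∧ ν (Set.Iio q) ≤ ENNReal.ofReal t ∧
      (∀ x, x < q → (ν (Set.Iic x)).toReal < t) ∧
      ∃ x₀ : ℝ, ENNReal.ofReal t < ν (Set.Iic x₀) := by
  set S : Set ℝ := {x | t ≤ ProbabilityTheory.cdf ν x} with hS
  obtain ⟨z, hz⟩ := ((tendsto_cdf_atTop ν).eventually (eventually_gt_nhds h1)).exists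
  have hSne : S.Nonempty := ⟨z, le_of_lt hz⟩
  have hSbdd : BddBelow S := by
    obtain ⟨x₀, hx₀⟩ := eventually_atBot.1 ((tendsto_cdf_atBot ν).eventually (eventually_lt_nhds h0))
    exact ⟨x₀, fun y hy => le_of_not_gt fun hcon => absurd hy (not_le.2 (hx₀ y (le_of_lt hcon)))⟩
  set q := sInf S with hq
  have hq_le : ∀ x ∈ S, q ≤ x := fun x hx => csInf_le hSbdd hx
  have hnotS : ∀ x, x < q → (ν (Set.Iic x)).toReal < t := by
    intro x hx
    rw [← measureReal_def, ← cdf_eq_real]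
    by_contra hcon
    exact absurd (hq_le x (not_lt.1 hcon)) (not_le.2 hx)
  have hqS : t ≤ ProbabilityTheory.cdf ν q := by
    have hcl : q ∈ closure S := csInf_mem_closure hSne hSbdd
    have hcont : ContinuousWithinAt (ProbabilityTheory.cdf ν) S q :=
      ((ProbabilityTheory.cdf ν).right_continuous q).mono (fun x hx => hq_le x hx)
    haveI : (𝓝[S] q).NeBot := mem_closure_iff_nhdsWithin_neBot.1 hcl
    exact ge_of_tendsto hcont (eventually_mem_nhdsWithin.mono (fun x hx => hx))
  refine ⟨q, ?_, ?_, hnotS, ⟨z, ?_⟩⟩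
  · rw [← ofReal_cdf]
    exact ENNReal.ofReal_le_ofReal hqS
  · have hUnion : Set.Iio q = ⋃ n : ℕ, Set.Iic (q - ((n:ℝ) + 1)⁻¹) := by
      ext x
      simp only [Set.mem_Iio, Set.mem_iUnion, Set.mem_Iic]
      constructor
      · intro hx
        obtain ⟨n, hn⟩ := exists_nat_one_div_lt (sub_pos.2 hx)
        rw [one_div] at hn
        exact ⟨n, by linarith⟩
      · rintro ⟨n, hn⟩
        have : (0:ℝ) < ((n:ℝ) + 1)⁻¹ := by positivity
        linarith
    have hmono : Monotone (fun n : ℕ => Set.Iic (q - ((n:ℝ) + 1)⁻¹)) := by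
      intro m n hmn
      apply Set.Iic_subset_Iic.2
      have h1 : ((n:ℝ) + 1)⁻¹ ≤ ((m:ℝ) + 1)⁻¹ := by
        apply inv_anti₀ (by positivity)
        exact_mod_cast add_le_add_left (Nat.cast_le.2 hmn) 1
      linarith
    rw [hUnion, Directed.measure_iUnion hmono.directed_le]
    refine iSup_le fun n => ?_
    have hlt : (ν (Set.Iic (q - ((n:ℝ) + 1)⁻¹))).toReal < t := by
      apply hnotS
      have : (0:ℝ) < ((n:ℝ) + 1)⁻¹ := by positivity
      linarith
    exact (ENNReal.le_ofReal_iff_toReal_le (measure_ne_top _ _) (le_of_lt h0)).2 (le_of_lt hlt)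
  · rw [← ofReal_cdf]
    exact (ENNReal.ofReal_lt_ofReal_iff_of_nonneg (le_of_lt h0)).2 hz

/-- The distributional transform `F̂_ξ(ξ; U)` of a random variable `ξ` with an independent
uniform(0,1) randomization `U` is uniformly distributed on `(0,1)`. -/
theorem stmt_9 {Ω : Type*} [MeasurableSpace Ω] (P : Measure Ω) [IsProbabilityMeasure P]
    (ξ U : Ω → ℝ) (hξm : Measurable ξ) (hUm : Measurable U)
    (hU : Measure.map U P = (MeasureTheory.volume.restrict (Set.Ioo (0:ℝ) 1)))
    (hindep : ProbabilityTheory.IndepFun ξ U P)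
    (T : Ω → ℝ)
    (hT : T = fun ω =>
      (P {a | ξ a < ξ ω}).toReal + U ω * (P {a | ξ a = ξ ω}).toReal) :
    Measure.map T P = (MeasureTheory.volume.restrict (Set.Ioo (0:ℝ) 1)) := by
  haveI hνprob : IsProbabilityMeasure (Measure.map ξ P) :=
    Measure.isProbabilityMeasure_map hξm.aemeasurable
  set ν : Measure ℝ := Measure.map ξ P with hνdef
  set Fm : ℝ → ℝ := fun x => (ν (Set.Iio x)).toReal with hFmdef
  set p : ℝ → ℝ := fun x => (ν {x}).toReal with hpdef
  have hmapIio : ∀ x : ℝ, ν (Set.Iio x) = P {a | ξ a < x} := fun x => by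
    rw [hνdef, Measure.map_apply hξm measurableSet_Iio]; rfl
  have hmapsing : ∀ x : ℝ, ν {x} = P {a | ξ a = x} := fun x => by
    rw [hνdef, Measure.map_apply hξm (measurableSet_singleton x)]; rfl
  have hT' : ∀ ω, T ω = Fm (ξ ω) + U ω * p (ξ ω) := by
    intro ω
    rw [hT]
    simp only [hFmdef, hpdef, hmapIio, hmapsing]
  have hFmmono : Monotone Fm := fun a b hab =>
    ENNReal.toReal_mono (measure_ne_top ν _) (measure_mono (Set.Iio_subset_Iio hab))
  have hFmono : Monotone (fun x => (ν (Set.Iic x)).toReal) := fun a b hab =>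
    ENNReal.toReal_mono (measure_ne_top ν _) (measure_mono (Set.Iic_subset_Iic.2 hab))
  have hsum : ∀ x : ℝ, ν (Set.Iic x) = ν (Set.Iio x) + ν {x} := fun x => by
    rw [← Set.Iio_union_right, measure_union (by simp) (measurableSet_singleton x)]
  have hsumR : ∀ x : ℝ, (ν (Set.Iic x)).toReal = Fm x + p x := fun x => by
    rw [hsum x, ENNReal.toReal_add (measure_ne_top _ _) (measure_ne_top _ _)]
  have hpmeas : Measurable p := by
    have hpeq : p = fun x => (ν (Set.Iic x)).toReal - Fm x := by
      funext x
      have := hsumR x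
      simp only [hFmdef, hpdef] at this ⊢
      linarith
    rw [hpeq]; exact hFmono.measurable.sub hFmmono.measurable
  have hTmeas : Measurable T := by
    have hTe : T = fun ω => Fm (ξ ω) + U ω * p (ξ ω) := funext hT'
    rw [hTe]
    exact (hFmmono.measurable.comp hξm).add (hUm.mul (hpmeas.comp hξm))
  have hFmnn : ∀ x, 0 ≤ Fm x := fun x => ENNReal.toReal_nonneg
  have hpnn : ∀ x, 0 ≤ p x := fun x => ENNReal.toReal_nonneg
  have hFle1 : ∀ x, (ν (Set.Iic x)).toReal ≤ 1 := fun x => by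
    rw [← ENNReal.toReal_one]
    exact ENNReal.toReal_mono ENNReal.one_ne_top prob_le_one
  set G : Set Ω := U ⁻¹' (Set.Ioo 0 1) with hGdef
  have hGm : MeasurableSet G := hUm measurableSet_Ioo
  have hG1 : P G = 1 := by
    rw [hGdef, ← Measure.map_apply hUm measurableSet_Ioo, hU,
      Measure.restrict_apply measurableSet_Ioo, Set.inter_self, Real.volume_Ioo]
    norm_num
  have hGc : P Gᶜ = 0 := by
    rw [measure_compl hGm (measure_ne_top _ _), measure_univ, hG1, tsub_self]
  have hconull : ∀ X : Set Ω, P (X ∩ G) = P X := by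
    intro X
    refine le_antisymm (measure_mono Set.inter_subset_left) ?_
    calc P X = P ((X ∩ G) ∪ (X ∩ Gᶜ)) := by rw [Set.inter_union_compl]
      _ ≤ P (X ∩ G) + P (X ∩ Gᶜ) := measure_union_le _ _
      _ ≤ P (X ∩ G) + 0 :=
          add_le_add_right ((measure_mono Set.inter_subset_right).trans (le_of_eq hGc)) _
      _ = P (X ∩ G) := add_zero _
  haveI : IsProbabilityMeasure (Measure.map T P) := Measure.isProbabilityMeasure_map hTmeas.aemeasurable
  refine Measure.ext_of_Iic (Measure.map T P) _ (fun t => ?_)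
  rw [Measure.map_apply hTmeas measurableSet_Iic, Measure.restrict_apply measurableSet_Iic]
  rcases le_or_gt t 0 with ht0 | ht0
  · -- t ≤ 0
    have hre : Set.Iic t ∩ Set.Ioo (0:ℝ) 1 = ∅ :=
      Set.eq_empty_iff_forall_notMem.2 fun u hu => absurd (hu.1.trans ht0) (not_le.2 hu.2.1)
    rw [hre, measure_empty]
    have hx₀ : ∃ x₀ : ℝ, ν (Set.Iic x₀) ≠ 0 := by
      by_contra hcon
      push_neg at hcon
      have huniv : (Set.univ : Set ℝ) = ⋃ n : ℕ, Set.Iic ((n:ℝ)) := by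
        ext x
        simp only [Set.mem_univ, true_iff, Set.mem_iUnion, Set.mem_Iic]
        exact exists_nat_ge x
      have h0 : ν Set.univ = 0 := by
        rw [huniv]; exact measure_iUnion_null fun n => hcon n
      rw [measure_univ] at h0
      exact one_ne_zero h0
    obtain ⟨x₀, hx₀⟩ := hx₀
    set C : Set ℝ := {x | ν (Set.Iic x) = 0} with hCdef
    have hC0 : ν C = 0 := by
      apply aux_null
      · refine ⟨x₀, fun y hy => le_of_not_gt fun hcon => hx₀ ?_⟩
        exact le_antisymm ((measure_mono (Set.Iic_subset_Iic.2 (le_of_lt hcon))).trans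
          (le_of_eq hy)) (zero_le)
      · intro x hx
        exact le_antisymm ((measure_mono Set.inter_subset_right).trans (le_of_eq hx)) (zero_le)
    have hsub : T ⁻¹' Set.Iic t ∩ G ⊆ ξ ⁻¹' C := by
      intro ω hω
      have hu : U ω ∈ Set.Ioo (0:ℝ) 1 := hω.2
      have hTω : Fm (ξ ω) + U ω * p (ξ ω) ≤ t := by rw [← hT' ω]; exact hω.1
      have h1 : 0 ≤ U ω * p (ξ ω) := mul_nonneg (le_of_lt hu.1) (hpnn _)
      have hFm0 : Fm (ξ ω) = 0 := le_antisymm (by linarith [hFmnn (ξ ω)]) (hFmnn _)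
      have hp0 : p (ξ ω) = 0 := by
        nlinarith [hu.1, hpnn (ξ ω), hFmnn (ξ ω)]
      show ν (Set.Iic (ξ ω)) = 0
      rw [hsum]
      have h2 : ν (Set.Iio (ξ ω)) = 0 :=
        (ENNReal.toReal_eq_zero_iff _).1 hFm0 |>.resolve_right (measure_ne_top ν _)
      have h3 : ν {ξ ω} = 0 :=
        (ENNReal.toReal_eq_zero_iff _).1 hp0 |>.resolve_right (measure_ne_top ν _)
      rw [h2, h3, add_zero]
    refine le_antisymm ?_ (zero_le)
    calc P (T ⁻¹' Set.Iic t) = P (T ⁻¹' Set.Iic t ∩ G) := (hconull _).symm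
      _ ≤ P (ξ ⁻¹' C) := measure_mono hsub
      _ ≤ ν C := by rw [hνdef]; exact Measure.le_map_apply hξm.aemeasurable C
      _ = 0 := hC0
  rcases le_or_gt 1 t with ht1 | ht1
  · -- 1 ≤ t
    have hre : Set.Iic t ∩ Set.Ioo (0:ℝ) 1 = Set.Ioo (0:ℝ) 1 := by
      apply Set.inter_eq_self_of_subset_right
      exact fun u hu => le_trans (le_of_lt hu.2) ht1
    rw [hre, Real.volume_Ioo]
    norm_num
    have hsub : G ⊆ T ⁻¹' Set.Iic t := by
      intro ω hω
      have h1 : U ω * p (ξ ω) ≤ p (ξ ω) := mul_le_of_le_one_left (hpnn _) (le_of_lt hω.2)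
      have h2 := hsumR (ξ ω)
      have h3 := hFle1 (ξ ω)
      show T ω ≤ t
      rw [hT' ω]
      linarith
    exact le_antisymm prob_le_one (hG1 ▸ measure_mono hsub)
  · -- main case : 0 < t < 1
    have hre : Set.Iic t ∩ Set.Ioo (0:ℝ) 1 = Set.Ioc (0:ℝ) t := by
      ext u
      simp only [Set.mem_inter_iff, Set.mem_Iic, Set.mem_Ioo, Set.mem_Ioc]
      exact ⟨fun h => ⟨h.2.1, h.1⟩, fun h => ⟨h.2, h.1, lt_of_le_of_lt h.2 ht1⟩⟩
    rw [hre, Real.volume_Ioc, sub_zero]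
    obtain ⟨q, hFq, hFmq, hnotS, x₀, hx₀⟩ := aux_quantile ν ht0 ht1
    -- below-q inclusion
    have hqlow : ∀ ω, ξ ω < q → U ω ∈ Set.Ioo (0:ℝ) 1 → T ω ≤ t := by
      intro ω hlt hu
      have h1 : U ω * p (ξ ω) ≤ p (ξ ω) := mul_le_of_le_one_left (hpnn _) (le_of_lt hu.2)
      have h2 := hsumR (ξ ω)
      have h3 := hnotS (ξ ω) hlt
      rw [hT' ω]
      linarith
    -- above-q analysis
    set B : Set ℝ := Set.Ioi q ∩ {x | ν (Set.Iic x) ≤ ENNReal.ofReal t} with hBdef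
    have hB0 : ν B = 0 := by
      apply aux_null
      · refine ⟨x₀, fun y hy => le_of_not_gt fun hcon => ?_⟩
        have : ν (Set.Iic x₀) ≤ ν (Set.Iic y) := measure_mono (Set.Iic_subset_Iic.2 (le_of_lt hcon))
        exact absurd (this.trans hy.2) (not_le.2 hx₀)
      · intro x hx
        have hsub2 : B ∩ Set.Iic x ⊆ Set.Ioc q x := fun y hy => ⟨hy.1.1, hy.2⟩
        have hun : ν (Set.Iic q) + ν (Set.Ioc q x) = ν (Set.Iic x) := by
          rw [← measure_union (Set.Iic_disjoint_Ioc le_rfl) measurableSet_Ioc,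
            Set.Iic_union_Ioc_eq_Iic (le_of_lt hx.1)]
        have hle : ν (Set.Iic q) + ν (Set.Ioc q x) ≤ ν (Set.Iic q) + 0 := by
          rw [add_zero, hun]
          exact hx.2.trans hFq
        have hIoc0 : ν (Set.Ioc q x) = 0 :=
          le_zero_iff.1 ((ENNReal.add_le_add_iff_left (measure_ne_top ν _)).1 hle)
        exact le_antisymm ((measure_mono hsub2).trans (le_of_eq hIoc0)) (zero_le)
    have hPB : P (ξ ⁻¹' B) = 0 := by
      refine le_antisymm ?_ (zero_le)
      calc P (ξ ⁻¹' B) ≤ (Measure.map ξ P) B := Measure.le_map_apply hξm.aemeasurable B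
        _ = 0 := by rw [← hνdef]; exact hB0
    have hhigh : ∀ ω, q < ξ ω → U ω ∈ Set.Ioo (0:ℝ) 1 → T ω ≤ t → ξ ω ∈ B := by
      intro ω hgt hu hTle
      have hTω : Fm (ξ ω) + U ω * p (ξ ω) ≤ t := by rw [← hT' ω]; exact hTle
      have hFmx : t ≤ Fm (ξ ω) := by
        have h1 : ENNReal.ofReal t ≤ ν (Set.Iio (ξ ω)) :=
          hFq.trans (measure_mono fun y hy => lt_of_le_of_lt hy hgt)
        exact (ENNReal.ofReal_le_iff_le_toReal (measure_ne_top _ _)).1 h1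
      have hp0 : p (ξ ω) = 0 := by
        nlinarith [hu.1, hpnn (ξ ω)]
      refine ⟨hgt, ?_⟩
      show ν (Set.Iic (ξ ω)) ≤ ENNReal.ofReal t
      refine (ENNReal.le_ofReal_iff_toReal_le (measure_ne_top _ _) (le_of_lt ht0)).2 ?_
      rw [hsumR, hp0, add_zero]
      nlinarith [hu.1, hpnn (ξ ω)]
    have hPIio : P (ξ ⁻¹' Set.Iio q) = ν (Set.Iio q) := by
      rw [hνdef, Measure.map_apply hξm measurableSet_Iio]
    have hPIic : P (ξ ⁻¹' Set.Iic q) = ν (Set.Iic q) := by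
      rw [hνdef, Measure.map_apply hξm measurableSet_Iic]
    have hPsing : P (ξ ⁻¹' {q}) = ν {q} := by
      rw [hνdef, Measure.map_apply hξm (measurableSet_singleton q)]
    have hFmqR : Fm q ≤ t :=
      (ENNReal.le_ofReal_iff_toReal_le (measure_ne_top _ _) (le_of_lt ht0)).1 hFmq
    by_cases hpq : p q = 0
    · -- no atom at q
      have hνq : ν {q} = 0 :=
        (ENNReal.toReal_eq_zero_iff _).1 hpq |>.resolve_right (measure_ne_top ν _)
      have hIic_eq : ν (Set.Iic q) = ν (Set.Iio q) := by rw [hsum, hνq, add_zero]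
      have hIio_eq : ν (Set.Iio q) = ENNReal.ofReal t :=
        le_antisymm hFmq (hIic_eq ▸ hFq)
      refine le_antisymm ?_ ?_
      · have hsub : T ⁻¹' Set.Iic t ∩ G ⊆ ξ ⁻¹' Set.Iic q ∪ ξ ⁻¹' B := by
          intro ω hω
          rcases le_or_gt (ξ ω) q with h | h
          · exact Or.inl h
          · exact Or.inr (hhigh ω h hω.2 hω.1)
        calc P (T ⁻¹' Set.Iic t) = P (T ⁻¹' Set.Iic t ∩ G) := (hconull _).symm
          _ ≤ P (ξ ⁻¹' Set.Iic q ∪ ξ ⁻¹' B) := measure_mono hsub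
          _ ≤ P (ξ ⁻¹' Set.Iic q) + P (ξ ⁻¹' B) := measure_union_le _ _
          _ = ENNReal.ofReal t := by rw [hPB, hPIic, hIic_eq, hIio_eq, add_zero]
      · have hsub : ξ ⁻¹' Set.Iio q ∩ G ⊆ T ⁻¹' Set.Iic t :=
          fun ω hω => hqlow ω hω.1 hω.2
        calc ENNReal.ofReal t = P (ξ ⁻¹' Set.Iio q ∩ G) := by
              rw [hconull, hPIio, hIio_eq]
          _ ≤ P (T ⁻¹' Set.Iic t) := measure_mono hsub
    · -- atom at q
      have hppos : 0 < p q := lt_of_le_of_ne (hpnn q) (Ne.symm hpq)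
      have hFqR : t ≤ Fm q + p q := by
        rw [← hsumR]
        exact (ENNReal.ofReal_le_iff_le_toReal (measure_ne_top _ _)).1 hFq
      set c : ℝ := (t - Fm q) / p q with hcdef
      have hc0 : 0 ≤ c := div_nonneg (by linarith) (le_of_lt hppos)
      have hc1 : c ≤ 1 := (div_le_one hppos).2 (by linarith)
      have hkey : p q * c = t - Fm q := by
        rw [hcdef]
        field_simp
      have hUc : P (U ⁻¹' Set.Iic c) = ENNReal.ofReal c := by
        rw [← Measure.map_apply hUm measurableSet_Iic, hU,
          Measure.restrict_apply measurableSet_Iic]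
        refine le_antisymm ?_ ?_
        · have h1 : Set.Iic c ∩ Set.Ioo (0:ℝ) 1 ⊆ Set.Ioc 0 c :=
            fun u hu => ⟨hu.2.1, hu.1⟩
          calc MeasureTheory.volume (Set.Iic c ∩ Set.Ioo (0:ℝ) 1)
              ≤ MeasureTheory.volume (Set.Ioc (0:ℝ) c) := measure_mono h1
            _ = ENNReal.ofReal c := by rw [Real.volume_Ioc, sub_zero]
        · have h2 : Set.Ioo (0:ℝ) c ⊆ Set.Iic c ∩ Set.Ioo (0:ℝ) 1 :=
            fun u hu => ⟨le_of_lt hu.2, hu.1, lt_of_lt_of_le hu.2 hc1⟩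
          calc ENNReal.ofReal c = MeasureTheory.volume (Set.Ioo (0:ℝ) c) := by
                rw [Real.volume_Ioo, sub_zero]
            _ ≤ _ := measure_mono h2
      have hqsetP : P (ξ ⁻¹' {q} ∩ U ⁻¹' Set.Iic c) = ν {q} * ENNReal.ofReal c := by
        rw [hindep.measure_inter_preimage_eq_mul {q} (Set.Iic c) (measurableSet_singleton q) measurableSet_Iic,
          hUc, hPsing]
      have hval : ν {q} * ENNReal.ofReal c = ENNReal.ofReal (t - Fm q) := by
        have hq' : ν {q} = ENNReal.ofReal (p q) := by
          rw [hpdef, ENNReal.ofReal_toReal (measure_ne_top _ _)]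
        rw [hq', ← ENNReal.ofReal_mul (hpnn q), hkey]
      have htotal : ν (Set.Iio q) + ν {q} * ENNReal.ofReal c = ENNReal.ofReal t := by
        have hIio' : ν (Set.Iio q) = ENNReal.ofReal (Fm q) := by
          rw [hFmdef, ENNReal.ofReal_toReal (measure_ne_top _ _)]
        rw [hval, hIio', ← ENNReal.ofReal_add (hFmnn q) (by linarith)]
        norm_num
      refine le_antisymm ?_ ?_
      · have hsub : T ⁻¹' Set.Iic t ∩ G ⊆
            ξ ⁻¹' Set.Iio q ∪ (ξ ⁻¹' {q} ∩ U ⁻¹' Set.Iic c) ∪ ξ ⁻¹' B := by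
          intro ω hω
          rcases lt_trichotomy (ξ ω) q with h | h | h
          · exact Or.inl (Or.inl h)
          · refine Or.inl (Or.inr ⟨h, ?_⟩)
            have hTω : Fm (ξ ω) + U ω * p (ξ ω) ≤ t := by rw [← hT' ω]; exact hω.1
            rw [h] at hTω
            show U ω ≤ c
            rw [hcdef, le_div_iff₀ hppos]
            linarith
          · exact Or.inr (hhigh ω h hω.2 hω.1)
        calc P (T ⁻¹' Set.Iic t) = P (T ⁻¹' Set.Iic t ∩ G) := (hconull _).symm
          _ ≤ P (ξ ⁻¹' Set.Iio q ∪ (ξ ⁻¹' {q} ∩ U ⁻¹' Set.Iic c) ∪ ξ ⁻¹' B) :=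
              measure_mono hsub
          _ ≤ P (ξ ⁻¹' Set.Iio q ∪ (ξ ⁻¹' {q} ∩ U ⁻¹' Set.Iic c)) + P (ξ ⁻¹' B) :=
              measure_union_le _ _
          _ ≤ P (ξ ⁻¹' Set.Iio q) + P (ξ ⁻¹' {q} ∩ U ⁻¹' Set.Iic c) + P (ξ ⁻¹' B) :=
              add_le_add_left (measure_union_le _ _) _
          _ = ENNReal.ofReal t := by rw [hPB, hPIio, hqsetP, add_zero, htotal]
      · have hsub : (ξ ⁻¹' Set.Iio q ∪ (ξ ⁻¹' {q} ∩ U ⁻¹' Set.Iic c)) ∩ G ⊆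
            T ⁻¹' Set.Iic t := by
          rintro ω ⟨h1 | h2, hG⟩
          · exact hqlow ω h1 hG
          · have hξq : ξ ω = q := h2.1
            have hUc' : U ω ≤ c := h2.2
            have hm : U ω * p q ≤ c * p q :=
              mul_le_mul_of_nonneg_right hUc' (hpnn q)  -- fix maybe
            show T ω ≤ t
            rw [hT' ω, hξq]
            nlinarith [hpnn q]
        have hdisj : Disjoint (ξ ⁻¹' Set.Iio q) (ξ ⁻¹' {q} ∩ U ⁻¹' Set.Iic c) := by
          rw [Set.disjoint_left]
          rintro ω h1 ⟨h2, -⟩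
          exact absurd (Set.mem_singleton_iff.1 h2) (ne_of_lt h1)
        calc ENNReal.ofReal t
            = P (ξ ⁻¹' Set.Iio q) + P (ξ ⁻¹' {q} ∩ U ⁻¹' Set.Iic c) := by
              rw [hPIio, hqsetP, htotal]
          _ = P (ξ ⁻¹' Set.Iio q ∪ (ξ ⁻¹' {q} ∩ U ⁻¹' Set.Iic c)) :=
              (measure_union hdisj ((hξm (measurableSet_singleton q)).inter
                (hUm measurableSet_Iic))).symm
          _ = P ((ξ ⁻¹' Set.Iio q ∪ (ξ ⁻¹' {q} ∩ U ⁻¹' Set.Iic c)) ∩ G) := (hconull _).symm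
          _ ≤ P (T ⁻¹' Set.Iic t) := measure_mono hsub
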